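/- arXiv:2301.05354 — 2 statements merged into one kernel-verified Lean document; each statement's English description precedes it below -/
import Mathlib

section
/- Let a, b ≥ 0 and μ̲ ≤ μ̄. For every continuous φ : ℝ → ℝ, max_{x ∈ [μ̲,μ̄]} max_{y ∈ [μ̲,μ̄]} φ(a·x + b·y) = max_{μ ∈ [μ̲,μ̄]} φ((a+b)·μ). In particular, if X is maximally distributed on [μ̲,μ̄] and X̄ is an independent copy, then aX + bX̄ has the same sublinear distribution as (a+b)X. -/
theorem maximal_distribution_stability (a b : ℝ) (ha : 0 ≤ a) (hb : 0 ≤ b)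
    (μl μu : ℝ) (h : μl ≤ μu) (φ : ℝ → ℝ) (hφ : Continuous φ) :
    (⨆ x ∈ Set.Icc μl μu, ⨆ y ∈ Set.Icc μl μu, φ (a * x + b * y))
      = ⨆ μ ∈ Set.Icc μl μu, φ ((a + b) * μ) := by
  set S := Set.Icc μl μu with hS
  -- a uniform bound
  obtain ⟨B0, hB0⟩ : BddAbove (φ '' Set.Icc (a * μl + b * μl) (a * μu + b * μu)) :=
    (isCompact_Icc.image_of_continuousOn hφ.continuousOn).bddAbove
  set B : ℝ := max B0 0 with hBdef
  have hB0' : (0 : ℝ) ≤ B := le_max_right _ _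
  have hmem : ∀ x ∈ S, ∀ y ∈ S, a * x + b * y ∈ Set.Icc (a * μl + b * μl) (a * μu + b * μu) := by
    rintro x ⟨hx1, hx2⟩ y ⟨hy1, hy2⟩
    constructor
    · exact add_le_add (mul_le_mul_of_nonneg_left hx1 ha) (mul_le_mul_of_nonneg_left hy1 hb)
    · exact add_le_add (mul_le_mul_of_nonneg_left hx2 ha) (mul_le_mul_of_nonneg_left hy2 hb)
  have hbd : ∀ x ∈ S, ∀ y ∈ S, φ (a * x + b * y) ≤ B := fun x hx y hy =>
    le_trans (hB0 ⟨_, hmem x hx y hy, rfl⟩) (le_max_left _ _)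
  have hbd' : ∀ μ ∈ S, φ ((a + b) * μ) ≤ B := by
    intro μ hμ
    have : (a + b) * μ = a * μ + b * μ := by ring
    rw [this]; exact hbd μ hμ μ hμ
  -- the RHS indexed family
  set g : ℝ → ℝ := fun μ => ⨆ _ : μ ∈ S, φ ((a + b) * μ) with hg
  have hgB : ∀ μ, g μ ≤ B := fun μ => Real.iSup_le (fun hμ => hbd' μ hμ) hB0'
  have hgbdd : BddAbove (Set.range g) := ⟨B, by rintro _ ⟨μ, rfl⟩; exact hgB μ⟩
  have hRHS0 : (0 : ℝ) ≤ ⨆ μ, g μ := by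
    have hnot : (μu + 1) ∉ S := by
      simp only [hS, Set.mem_Icc, not_and, not_le]; intro; linarith
    have h0 : g (μu + 1) = 0 := by
      rw [hg]
      simp only [hnot, iSup_neg, not_false_iff]
      exact Real.iSup_of_isEmpty _
    calc (0:ℝ) = g (μu + 1) := h0.symm
    _ ≤ ⨆ μ, g μ := le_ciSup hgbdd _
  -- inner family of LHS
  set f2 : ℝ → ℝ → ℝ := fun x y => ⨆ _ : y ∈ S, φ (a * x + b * y) with hf2
  set f1 : ℝ → ℝ := fun x => ⨆ _ : x ∈ S, ⨆ y, f2 x y with hf1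
  have hf2B : ∀ x ∈ S, ∀ y, f2 x y ≤ B := fun x hx y =>
    Real.iSup_le (fun hy => hbd x hx y hy) hB0'
  have hf2bdd : ∀ x ∈ S, BddAbove (Set.range (f2 x)) := fun x hx =>
    ⟨B, by rintro _ ⟨y, rfl⟩; exact hf2B x hx y⟩
  have hf1B : ∀ x, f1 x ≤ B := fun x =>
    Real.iSup_le (fun hx => Real.iSup_le (fun y => hf2B x hx y) hB0') hB0'
  have hf1bdd : BddAbove (Set.range f1) := ⟨B, by rintro _ ⟨x, rfl⟩; exact hf1B x⟩
  have hLHS0 : (0 : ℝ) ≤ ⨆ x, f1 x := by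
    have hnot : (μu + 1) ∉ S := by
      simp only [hS, Set.mem_Icc, not_and, not_le]; intro; linarith
    have h0 : f1 (μu + 1) = 0 := by
      rw [hf1]
      simp only [hnot, iSup_neg, not_false_iff]
      exact Real.iSup_of_isEmpty _
    calc (0:ℝ) = f1 (μu + 1) := h0.symm
    _ ≤ ⨆ x, f1 x := le_ciSup hf1bdd _
  apply le_antisymm
  · -- LHS ≤ RHS
    refine Real.iSup_le (fun x => ?_) hRHS0
    refine Real.iSup_le (fun hx => ?_) hRHS0
    refine Real.iSup_le (fun y => ?_) hRHS0
    refine Real.iSup_le (fun hy => ?_) hRHS0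
    rcases eq_or_lt_of_le (add_nonneg ha hb) with hab | hab
    · -- a + b = 0, so a = b = 0
      have ha0 : a = 0 := by linarith [add_nonneg ha hb, hab.symm ▸ (le_refl (0:ℝ))];
      have hb0 : b = 0 := by linarith
      have : φ (a * x + b * y) = φ ((a + b) * μl) := by
        rw [ha0, hb0]; ring_nf
      rw [this]
      calc φ ((a+b) * μl) = g μl := (ciSup_pos (f := fun _ => φ ((a+b) * μl)) (show μl ∈ S from ⟨le_refl _, h⟩)).symm
      _ ≤ ⨆ μ, g μ := le_ciSup hgbdd _
    · -- a + b > 0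
      set μ := (a * x + b * y) / (a + b) with hμdef
      have hxy : a * x + b * y = (a + b) * μ := by
        rw [hμdef]; field_simp
      have hμS : μ ∈ S := by
        rcases hx with ⟨hx1, hx2⟩; rcases hy with ⟨hy1, hy2⟩
        constructor
        · rw [le_div_iff₀ hab]
          nlinarith
        · rw [div_le_iff₀ hab]
          nlinarith
      rw [hxy]
      calc φ ((a+b) * μ) = g μ := (ciSup_pos (f := fun _ => φ ((a+b) * μ)) hμS).symm
      _ ≤ ⨆ μ, g μ := le_ciSup hgbdd _
  · -- RHS ≤ LHS
    refine Real.iSup_le (fun μ => ?_) hLHS0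
    refine Real.iSup_le (fun hμ => ?_) hLHS0
    have : φ ((a + b) * μ) = φ (a * μ + b * μ) := by ring_nf
    rw [this]
    calc φ (a * μ + b * μ) = f2 μ μ := (ciSup_pos (f := fun _ => φ (a * μ + b * μ)) hμ).symm
    _ ≤ ⨆ y, f2 μ y := le_ciSup (hf2bdd μ hμ) _
    _ = f1 μ := (ciSup_pos (f := fun _ => ⨆ y, f2 μ y) hμ).symm
    _ ≤ ⨆ x, f1 x := le_ciSup hf1bdd _
end

section
/- Let μ̲ ≤ μ̄ and let f : ℝ^n → ℝ be continuous with max_{(μ_1,…,μ_n) ∈ [μ̲,μ̄]^n} f(μ_1,…,μ_n) = μ̄ for all choices of μ̲ ≤ μ̄ (i.e., f is an unbiased estimator of the upper mean for every parameter pair). Then f(x_1,…,x_n) ≤ max(x_1,…,x_n) for all (x_1,…,x_n) ∈ ℝ^n; i.e., max(X_1,…,X_n) is the largest unbiased estimator of μ̄. -/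
theorem max_is_largest_unbiased_estimator (n : ℕ) (hn : 1 ≤ n)
    (f : (Fin n → ℝ) → ℝ) (hf : Continuous f)
    (hunbiased : ∀ a b : ℝ, a ≤ b →
      sSup (f '' {μ : Fin n → ℝ | ∀ i, μ i ∈ Set.Icc a b}) = b) :
    ∀ x : Fin n → ℝ, f x ≤ ⨆ i, x i := by
  intro x
  haveI : Nonempty (Fin n) := ⟨⟨0, hn⟩⟩
  set a := ⨅ i, x i with ha
  set b := ⨆ i, x i with hb
  have hab : a ≤ b := le_trans (ciInf_le (Set.finite_range x).bddBelow ⟨0, hn⟩) (le_ciSup (Set.finite_range x).bddAbove ⟨0, hn⟩)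
  have hmem : x ∈ {μ : Fin n → ℝ | ∀ i, μ i ∈ Set.Icc a b} := by
    intro i
    exact ⟨ciInf_le (Set.finite_range x).bddBelow i, le_ciSup (Set.finite_range x).bddAbove i⟩
  have hset : {μ : Fin n → ℝ | ∀ i, μ i ∈ Set.Icc a b} = Set.univ.pi (fun _ => Set.Icc a b) := by
    ext μ; simp [Set.mem_pi, Pi.le_def, forall_and]
  have hcomp : IsCompact {μ : Fin n → ℝ | ∀ i, μ i ∈ Set.Icc a b} := by
    rw [hset]; exact isCompact_univ_pi (fun _ => isCompact_Icc)
  have hbdd : BddAbove (f '' {μ : Fin n → ℝ | ∀ i, μ i ∈ Set.Icc a b}) :=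
    (hcomp.image hf).bddAbove
  calc f x ≤ sSup (f '' {μ : Fin n → ℝ | ∀ i, μ i ∈ Set.Icc a b}) :=
        le_csSup hbdd ⟨x, hmem, rfl⟩
    _ = b := hunbiased a b hab
end
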